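/- Let k be a field, let n ≥ 1 and r ≥ 1, and suppose there are matrices a₁,…,aₙ,b₁,…,bₙ ∈ M_{r×r}(k) such that all pairwise commutators vanish — i.e. aᵢaⱼ = aⱼaᵢ and bᵢbⱼ = bⱼbᵢ for all i,j, and aᵢbⱼ = bⱼaᵢ whenever i ≠ j — while [aᵢ,bᵢ] = aᵢbᵢ − bᵢaᵢ ≠ 0 for every i ∈ {1,…,n}. Then r ≥ n+1. -/

import Mathlib

open Matrix

section Auxiliary

variable {K : Type*}

/-- Over an infinite field, given finitely many nonzero linear maps, there is a common
vector on which they are all nonzero. -/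

-- avoiding finitely many kernels over an infinite field
lemma exists_forall_ne_zero {K V W : Type*} [Field K] [Infinite K]
    [AddCommGroup V] [Module K V] [AddCommGroup W] [Module K W]
    {ι : Type*} (s : Finset ι) (g : ι → V →ₗ[K] W) (hg : ∀ i ∈ s, g i ≠ 0) :
    ∃ x : V, ∀ i ∈ s, g i x ≠ 0 := by
  classical
  induction s using Finset.induction_on with
  | empty => exact ⟨0, by simp⟩
  | @insert a s ha ih =>
    obtain ⟨x, hx⟩ := ih (fun i hi => hg i (Finset.mem_insert_of_mem hi))
    have hga : g a ≠ 0 := hg a (Finset.mem_insert_self a s)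
    obtain ⟨y, hy⟩ : ∃ y, g a y ≠ 0 := by
      by_contra h
      push_neg at h
      exact hga (LinearMap.ext fun z => by simpa using h z)
    set bad : ι → K := fun i =>
      if h : ∃ c : K, g i x + c • g i y = 0 then h.choose else 0 with hbad
    obtain ⟨c, hc⟩ := Infinite.exists_notMem_finset ((insert a s).image bad)
    refine ⟨x + c • y, fun i hi hzero => ?_⟩
    have h1 : g i x + c • g i y = 0 := by
      simpa [map_add, _root_.map_smul] using hzero
    have hex : ∃ c : K, g i x + c • g i y = 0 := ⟨c, h1⟩
    have h2 : g i x + bad i • g i y = 0 := by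
      rw [hbad]; simp only [dif_pos hex]; exact hex.choose_spec
    have hgy : g i y ≠ 0 := by
      rcases Finset.mem_insert.mp hi with rfl | hi'
      · exact hy
      · intro h0
        rw [h0, smul_zero, add_zero] at h1
        exact hx i hi' h1
    have hceq : c = bad i := by
      have hsub : (c - bad i) • g i y = 0 := by
        rw [sub_smul]
        calc c • g i y - bad i • g i y
            = (g i x + c • g i y) - (g i x + bad i • g i y) := by abel
          _ = 0 := by rw [h1, h2]; simp
      rcases smul_eq_zero.mp hsub with h | h
      · exact sub_eq_zero.mp h
      · exact absurd h hgy
    exact hc (Finset.mem_image.mpr ⟨i, hi, hceq.symm⟩)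

-- dot product with a fixed vector, as a linear map
def dotL {K : Type*} [Field K] {r : ℕ} (w : Fin r → K) : (Fin r → K) →ₗ[K] K where
  toFun v := w ⬝ᵥ v
  map_add' x y := dotProduct_add w x y
  map_smul' c x := by simp [dotProduct_smul, smul_eq_mul]

lemma dotL_ne_zero {K : Type*} [Field K] {r : ℕ} {w : Fin r → K} (hw : w ≠ 0) :
    dotL w ≠ 0 := by
  obtain ⟨j, hj⟩ : ∃ j, w j ≠ 0 := by
    by_contra h; push_neg at h; exact hw (funext h)
  intro h0
  have h1 : dotL w (Pi.single j 1) = 0 := by rw [h0]; rfl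
  rw [show dotL w (Pi.single j 1) = w ⬝ᵥ Pi.single j 1 from rfl,
    dotProduct_single, mul_one] at h1
  exact hj h1

lemma exists_uv {K : Type*} [Field K] [Infinite K] {n r : ℕ}
    (C : Fin n → Matrix (Fin r) (Fin r) K) (hC : ∀ i, C i ≠ 0) :
    ∃ u v : Fin r → K, ∀ i, u ⬝ᵥ (C i) *ᵥ v ≠ 0 := by
  classical
  -- step 1 : choose u with (C i)ᵀ *ᵥ u ≠ 0 for all i
  obtain ⟨u, hu⟩ := exists_forall_ne_zero (K := K) (Finset.univ : Finset (Fin n))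
    (fun i => Matrix.mulVecLin (C i)ᵀ)
    (fun i _ h => by
      apply hC i
      ext s t
      have : (C i)ᵀ *ᵥ Pi.single s 1 = 0 := by
        have := congrArg (fun f => f (Pi.single s 1)) h
        simpa [Matrix.mulVecLin] using this
      have := congrFun this t
      simpa [Matrix.mulVec_single] using this)
  -- step 2 : choose v with ((C i)ᵀ *ᵥ u) ⬝ᵥ v ≠ 0 for all i
  obtain ⟨v, hv⟩ := exists_forall_ne_zero (K := K) (Finset.univ : Finset (Fin n))
    (fun i => dotL ((C i)ᵀ *ᵥ u))
    (fun i _ => dotL_ne_zero (by exact hu i (Finset.mem_univ i)))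
  refine ⟨u, v, fun i => ?_⟩
  have := hv i (Finset.mem_univ i)
  rw [show dotL ((C i)ᵀ *ᵥ u) v = ((C i)ᵀ *ᵥ u) ⬝ᵥ v from rfl] at this
  rwa [Matrix.mulVec_transpose, ← Matrix.dotProduct_mulVec] at this

variable [Field K] {r : ℕ}


-- the symplectic-type functional attached to a matrix M and fixed vectors u, v
def phiL (u v : Fin r → K) (M : Matrix (Fin r) (Fin r) K) :
    ((Fin r → K) × (Fin r → K)) →ₗ[K] K where
  toFun z := z.2 ⬝ᵥ (M *ᵥ v) - (Mᵀ *ᵥ u) ⬝ᵥ z.1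
  map_add' z w := by simp [add_dotProduct, dotProduct_add]; ring
  map_smul' c z := by simp [smul_dotProduct, dotProduct_smul, smul_eq_mul]; ring

lemma key_dot (u v : Fin r → K) (X Y : Matrix (Fin r) (Fin r) K) :
    (Xᵀ *ᵥ u) ⬝ᵥ (Y *ᵥ v) = u ⬝ᵥ ((X * Y) *ᵥ v) := by
  rw [Matrix.mulVec_transpose, Matrix.dotProduct_mulVec, Matrix.vecMul_vecMul,
    ← Matrix.dotProduct_mulVec]

lemma phiL_theta (u v : Fin r → K) (M N : Matrix (Fin r) (Fin r) K) :
    phiL u v M (N *ᵥ v, Nᵀ *ᵥ u) = u ⬝ᵥ ((N * M - M * N) *ᵥ v) := by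
  show (Nᵀ *ᵥ u) ⬝ᵥ (M *ᵥ v) - (Mᵀ *ᵥ u) ⬝ᵥ (N *ᵥ v) = _
  rw [key_dot, key_dot, Matrix.sub_mulVec, dotProduct_sub]


theorem aux {K : Type*} [Field K] [Infinite K] (n r : ℕ) (hn : 1 ≤ n)
    (a b : Fin n → Matrix (Fin r) (Fin r) K)
    (haa : ∀ i j, a i * a j = a j * a i)
    (hbb : ∀ i j, b i * b j = b j * b i)
    (hab : ∀ i j, i ≠ j → a i * b j = b j * a i)
    (hne : ∀ i, a i * b i - b i * a i ≠ 0) :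
    n + 1 ≤ r := by
  classical
  obtain ⟨u, v, huv⟩ := exists_uv (fun i => a i * b i - b i * a i) hne
  have huv' : ∀ i : Fin n, u ⬝ᵥ ((a i * b i - b i * a i) *ᵥ v) ≠ 0 := huv
  set Θ : Matrix (Fin r) (Fin r) K → (Fin r → K) × (Fin r → K) :=
    fun M => (M *ᵥ v, Mᵀ *ᵥ u) with hΘ
  set w : (Fin n ⊕ Fin n) ⊕ Unit → (Fin r → K) × (Fin r → K) :=
    Sum.elim (Sum.elim (fun i => Θ (a i)) (fun i => Θ (b i))) (fun _ => Θ 1) with hw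
  have hv0 : v ≠ 0 := by
    intro h
    exact huv' ⟨0, hn⟩ (by rw [h]; simp)
  have gram : ∀ M N, phiL u v M (Θ N) = u ⬝ᵥ ((N * M - M * N) *ᵥ v) :=
    fun M N => phiL_theta u v M N
  have li : LinearIndependent K w := by
    rw [Fintype.linearIndependent_iff]
    intro g hg
    have happ : ∀ M : Matrix (Fin r) (Fin r) K,
        (∑ i : (Fin n ⊕ Fin n) ⊕ Unit, g i • phiL u v M (w i)) = 0 := by
      intro M
      have h1 := congrArg (phiL u v M) hg
      rw [map_sum, map_zero] at h1
      simpa [_root_.map_smul] using h1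
    -- a-side coefficients vanish
    have hA : ∀ j : Fin n, g (Sum.inl (Sum.inl j)) = 0 := by
      intro j
      have h0 := happ (b j)
      rw [Fintype.sum_sum_type, Fintype.sum_sum_type] at h0
      have e1 : (∑ i : Fin n, g (Sum.inl (Sum.inl i)) • phiL u v (b j) (w (Sum.inl (Sum.inl i))))
          = g (Sum.inl (Sum.inl j)) • (u ⬝ᵥ ((a j * b j - b j * a j) *ᵥ v)) := by
        rw [Finset.sum_eq_single j]
        · show g (Sum.inl (Sum.inl j)) • phiL u v (b j) (Θ (a j)) = _
          rw [gram]
        · intro i _ hij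
          show g (Sum.inl (Sum.inl i)) • phiL u v (b j) (Θ (a i)) = 0
          rw [gram, hab i j hij, sub_self, Matrix.zero_mulVec, dotProduct_zero, smul_zero]
        · intro h; exact absurd (Finset.mem_univ j) h
      have e2 : (∑ i : Fin n, g (Sum.inl (Sum.inr i)) • phiL u v (b j) (w (Sum.inl (Sum.inr i))))
          = 0 := by
        refine Finset.sum_eq_zero fun i _ => ?_
        show g (Sum.inl (Sum.inr i)) • phiL u v (b j) (Θ (b i)) = 0
        rw [gram, hbb i j, sub_self, Matrix.zero_mulVec, dotProduct_zero, smul_zero]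
      have e3 : (∑ x : Unit, g (Sum.inr x) • phiL u v (b j) (w (Sum.inr x))) = 0 := by
        refine Finset.sum_eq_zero fun x _ => ?_
        show g (Sum.inr x) • phiL u v (b j) (Θ 1) = 0
        rw [gram, one_mul, mul_one, sub_self, Matrix.zero_mulVec, dotProduct_zero, smul_zero]
      rw [e1, e2, e3, add_zero, add_zero, smul_eq_mul, mul_eq_zero] at h0
      exact h0.resolve_right (huv' j)
    -- b-side coefficients vanish
    have hB : ∀ j : Fin n, g (Sum.inl (Sum.inr j)) = 0 := by
      intro j
      have h0 := happ (a j)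
      rw [Fintype.sum_sum_type, Fintype.sum_sum_type] at h0
      have e1 : (∑ i : Fin n, g (Sum.inl (Sum.inl i)) • phiL u v (a j) (w (Sum.inl (Sum.inl i))))
          = 0 := by
        refine Finset.sum_eq_zero fun i _ => ?_
        show g (Sum.inl (Sum.inl i)) • phiL u v (a j) (Θ (a i)) = 0
        rw [gram, haa i j, sub_self, Matrix.zero_mulVec, dotProduct_zero, smul_zero]
      have e2 : (∑ i : Fin n, g (Sum.inl (Sum.inr i)) • phiL u v (a j) (w (Sum.inl (Sum.inr i))))
          = g (Sum.inl (Sum.inr j)) • (u ⬝ᵥ ((b j * a j - a j * b j) *ᵥ v)) := by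
        rw [Finset.sum_eq_single j]
        · show g (Sum.inl (Sum.inr j)) • phiL u v (a j) (Θ (b j)) = _
          rw [gram]
        · intro i _ hij
          show g (Sum.inl (Sum.inr i)) • phiL u v (a j) (Θ (b i)) = 0
          rw [gram, hab j i (Ne.symm hij), sub_self, Matrix.zero_mulVec, dotProduct_zero,
            smul_zero]
        · intro h; exact absurd (Finset.mem_univ j) h
      have e3 : (∑ x : Unit, g (Sum.inr x) • phiL u v (a j) (w (Sum.inr x))) = 0 := by
        refine Finset.sum_eq_zero fun x _ => ?_
        show g (Sum.inr x) • phiL u v (a j) (Θ 1) = 0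
        rw [gram, one_mul, mul_one, sub_self, Matrix.zero_mulVec, dotProduct_zero, smul_zero]
      rw [e1, e2, e3, zero_add, add_zero, smul_eq_mul, mul_eq_zero] at h0
      have hneg : b j * a j - a j * b j = -(a j * b j - b j * a j) := (neg_sub _ _).symm
      rcases h0 with h0 | h0
      · exact h0
      · exfalso
        rw [hneg, Matrix.neg_mulVec, dotProduct_neg, neg_eq_zero] at h0
        exact huv' j h0
    -- the last coefficient vanishes
    have hP : g (Sum.inr ()) = 0 := by
      rw [Fintype.sum_sum_type, Fintype.sum_sum_type] at hg
      have e1 : (∑ i : Fin n, g (Sum.inl (Sum.inl i)) • w (Sum.inl (Sum.inl i))) = 0 :=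
        Finset.sum_eq_zero fun i _ => by rw [hA i, zero_smul]
      have e2 : (∑ i : Fin n, g (Sum.inl (Sum.inr i)) • w (Sum.inl (Sum.inr i))) = 0 :=
        Finset.sum_eq_zero fun i _ => by rw [hB i, zero_smul]
      rw [e1, e2, add_zero, zero_add] at hg
      have hsplit : g (Sum.inr PUnit.unit) = 0 ∨ w (Sum.inr PUnit.unit) = 0 := by
        simpa using hg
      refine hsplit.resolve_right fun h => hv0 ?_
      have h1 : (Θ 1).1 = 0 := by rw [show Θ 1 = w (Sum.inr PUnit.unit) from rfl, h]; rfl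
      simpa [hΘ] using h1
    rintro ((i | i) | ⟨⟩)
    · exact hA i
    · exact hB i
    · exact hP
  have card := li.fintype_card_le_finrank
  have hcard : Fintype.card ((Fin n ⊕ Fin n) ⊕ Unit) = n + n + 1 := by simp
  have hrank : Module.finrank K ((Fin r → K) × (Fin r → K)) = r + r := by
    simp [Module.finrank_prod]
  rw [hcard, hrank] at card
  omega

end Auxiliary


/-- **Theorem 2 (Abért question).** If `a₁,…,aₙ,b₁,…,bₙ` are `r × r` matrices over a field `k`
such that all pairwise commutators vanish except that `[aᵢ, bᵢ] = aᵢbᵢ - bᵢaᵢ ≠ 0` for each `i`,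
then `r ≥ n + 1`. -/
theorem min_dim_of_noncommuting_pairs (k : Type*) [Field k] (n r : ℕ) (hn : 1 ≤ n) (hr : 1 ≤ r)
    (a b : Fin n → Matrix (Fin r) (Fin r) k)
    (haa : ∀ i j, a i * a j = a j * a i)
    (hbb : ∀ i j, b i * b j = b j * b i)
    (hab : ∀ i j, i ≠ j → a i * b j = b j * a i)
    (hne : ∀ i, a i * b i - b i * a i ≠ 0) :
    n + 1 ≤ r := by
  classical
  let K := FractionRing (Polynomial k)
  haveI : Infinite K :=
    Infinite.of_injective _ (IsFractionRing.injective (Polynomial k) K)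
  set f : k →+* K := (algebraMap (Polynomial k) K).comp (Polynomial.C : k →+* Polynomial k)
    with hfdef
  have hf : Function.Injective f :=
    (IsFractionRing.injective (Polynomial k) K).comp Polynomial.C_injective
  have hmul : ∀ X Y : Matrix (Fin r) (Fin r) k,
      (X * Y).map f = X.map f * Y.map f := fun X Y => Matrix.map_mul
  have hsub : ∀ X Y : Matrix (Fin r) (Fin r) k,
      (X - Y).map f = X.map f - Y.map f := fun X Y =>
    Matrix.map_sub f (fun x y => map_sub f x y) X Y
  have hinj : ∀ X : Matrix (Fin r) (Fin r) k, X.map f = 0 → X = 0 := by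
    intro X h
    ext i j
    have := congrFun (congrFun h i) j
    simp only [Matrix.map_apply, Matrix.zero_apply] at this ⊢
    exact hf (by simpa using this)
  refine aux n r hn (fun i => (a i).map f) (fun i => (b i).map f) ?_ ?_ ?_ ?_
  · intro i j; rw [← hmul, ← hmul, haa i j]
  · intro i j; rw [← hmul, ← hmul, hbb i j]
  · intro i j hij; rw [← hmul, ← hmul, hab i j hij]
  · intro i h
    apply hne i
    apply hinj
    rw [hsub, hmul, hmul]
    simpa using h
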